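/- Suppose that for a sequence of Jacobi parameters (α_n, β_n), the quotients (α_n + β_n)/n → ∞ in absolute value and (β_n − α_n)/(α_n + β_n) → κ ∈ ℂ, and suppose C : U → ℂ is a function on an open set U ⊆ ℂ such that for each z ∈ U the limits C_n(z) := p_n'(z)/(n p_n(z)) → C(z) and p_n''(z)/((n−1)p_n'(z)) → C(z) both hold, where p_n = P_n^{(α_n,β_n)} satisfies (1−z²)p_n'' + ((β_n−α_n) − (α_n+β_n+2)z)p_n' + n(n+α_n+β_n+1)p_n = 0. Then (z − κ)C(z) = 1 for every z ∈ U. -/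

import Mathlib

open Filter Topology Polynomial

theorem stmt_17 (α β : ℕ → ℂ) (κ : ℂ)
    (h1 : Tendsto (fun n => ‖(α n + β n) / (n : ℂ)‖) atTop atTop)
    (h2 : Tendsto (fun n => (β n - α n) / (α n + β n)) atTop (𝓝 κ))
    (p : ℕ → Polynomial ℂ)
    (hODE : ∀ n : ℕ,
      (1 - X ^ 2) * derivative (derivative (p n))
        + (C (β n - α n) - C (α n + β n + 2) * X) * derivative (p n)
        + C ((n : ℂ) * ((n : ℂ) + α n + β n + 1)) * (p n) = 0)
    (U : Set ℂ) (hU : IsOpen U) (F : ℂ → ℂ)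
    (hnz : ∀ z ∈ U, ∀ᶠ n in atTop,
      (p n).eval z ≠ 0 ∧ (derivative (p n)).eval z ≠ 0)
    (hF : ∀ z ∈ U,
      Tendsto (fun n => (derivative (p n)).eval z / ((n : ℂ) * (p n).eval z))
        atTop (𝓝 (F z)))
    (hF' : ∀ z ∈ U,
      Tendsto (fun n => (derivative (derivative (p n))).eval z
          / (((n : ℂ) - 1) * (derivative (p n)).eval z))
        atTop (𝓝 (F z))) :
    ∀ z ∈ U, (z - κ) * F z = 1 := by
  intro z hz
  set a : ℕ → ℂ := fun n => α n + β n with ha_def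
  -- a n ≠ 0 eventually
  have hane : ∀ᶠ n in atTop, a n ≠ 0 := by
    filter_upwards [h1.eventually_gt_atTop 0, eventually_ge_atTop 1] with n hn hn1
    intro h
    rw [ha_def] at h
    simp only [h, zero_div, map_zero, norm_zero] at hn
    exact lt_irrefl 0 hn
  -- (n : ℂ)/(a n) → 0
  have L1 : Tendsto (fun n : ℕ => (n : ℂ) / a n) atTop (𝓝 0) := by
    rw [tendsto_zero_iff_norm_tendsto_zero]
    have : (fun n : ℕ => ‖(n : ℂ) / a n‖) = fun n : ℕ => (‖(α n + β n) / (n : ℂ)‖)⁻¹ := by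
      funext n
      rw [← inv_div, norm_inv]
    rw [this]
    exact tendsto_inv_atTop_zero.comp h1
  -- (a n)⁻¹ → 0
  have L2 : Tendsto (fun n : ℕ => (a n)⁻¹) atTop (𝓝 0) := by
    rw [tendsto_zero_iff_norm_tendsto_zero]
    have habs : Tendsto (fun n : ℕ => ‖a n‖) atTop atTop := by
      apply tendsto_atTop_mono' _ _ h1
      filter_upwards [eventually_ge_atTop 1] with n hn
      have : ‖(α n + β n) / (n : ℂ)‖ = ‖a n‖ / (n : ℝ) := by
        rw [norm_div, Complex.norm_natCast]
      rw [this]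
      apply div_le_self (norm_nonneg _)
      exact_mod_cast hn
    simpa [norm_inv, Function.comp_def] using tendsto_inv_atTop_zero.comp habs
  -- (n : ℂ)/((n:ℂ)-1) → 1
  have L3 : Tendsto (fun n : ℕ => (n : ℂ) / ((n : ℂ) - 1)) atTop (𝓝 1) := by
    have hr : Tendsto (fun n : ℕ => ((n : ℝ) - 1)⁻¹) atTop (𝓝 0) := by
      apply tendsto_inv_atTop_zero.comp
      exact tendsto_atTop_add_const_right _ (-1) tendsto_natCast_atTop_atTop
    have hc : Tendsto (fun n : ℕ => ((n : ℂ) - 1)⁻¹) atTop (𝓝 0) := by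
      have := (Complex.continuous_ofReal.tendsto 0).comp hr
      refine this.congr fun n => ?_
      simp only [Function.comp_apply]
      push_cast
      ring
    have := (tendsto_const_nhds (x := (1:ℂ)) (f := atTop)).add hc
    rw [add_zero] at this
    apply Tendsto.congr' _ this
    filter_upwards [eventually_ge_atTop 2] with n hn
    have hn1 : (n : ℂ) - 1 ≠ 0 := by
      intro h
      have : (n : ℂ) = 1 := by linear_combination h
      have : (n : ℕ) = 1 := by exact_mod_cast this
      omega
    field_simp
    ring
  have hP := hF z hz
  have hP' := hF' z hz
  -- the combined sequence
  set P : ℕ → ℂ := fun n => (p n).eval z with hP_def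
  set D1 : ℕ → ℂ := fun n => (derivative (p n)).eval z with hD1_def
  set D2 : ℕ → ℂ := fun n => (derivative (derivative (p n))).eval z with hD2_def
  set T : ℕ → ℂ := fun n =>
    (1 - z^2) * (D2 n / (((n:ℂ) - 1) * D1 n)) * (D1 n / ((n:ℂ) * P n)) * ((n:ℂ) / a n)
    + ((β n - α n) / a n - z * (1 + 2 * (a n)⁻¹)) * ((n:ℂ) / ((n:ℂ) - 1)) * (D1 n / ((n:ℂ) * P n))
    + ((n:ℂ) / ((n:ℂ) - 1)) * ((n:ℂ) / a n + 1 + (a n)⁻¹) with hT_def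
  -- T tends to (κ - z) * F z + 1
  have hTlim : Tendsto T atTop (𝓝 ((1 - z^2) * F z * F z * 0
      + (κ - z * (1 + 2 * 0)) * 1 * F z + 1 * (0 + 1 + 0))) := by
    apply Tendsto.add
    apply Tendsto.add
    · exact (((tendsto_const_nhds.mul hP').mul hP).mul L1)
    · exact ((h2.sub (tendsto_const_nhds.mul (tendsto_const_nhds.add
        (tendsto_const_nhds.mul L2)))).mul L3).mul hP
    · exact L3.mul ((L1.add tendsto_const_nhds).add L2)
  -- T is eventually 0
  have hT0 : ∀ᶠ n in atTop, T n = 0 := by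
    filter_upwards [hnz z hz, hane, eventually_ge_atTop 2] with n ⟨hp0, hp1⟩ han hn2
    have hn1 : (n : ℂ) - 1 ≠ 0 := by
      intro h
      have : (n : ℂ) = 1 := by linear_combination h
      have : (n : ℕ) = 1 := by exact_mod_cast this
      omega
    have hn0 : (n : ℂ) ≠ 0 := by
      intro h
      have : (n : ℕ) = 0 := by exact_mod_cast h
      omega
    have hE : (1 - z^2) * D2 n + ((β n - α n) - (α n + β n + 2) * z) * D1 n
        + ((n : ℂ) * ((n : ℂ) + α n + β n + 1)) * P n = 0 := by
      have := congrArg (Polynomial.eval z) (hODE n)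
      simpa [hP_def, hD1_def, hD2_def] using this
    have han' : α n + β n ≠ 0 := han
    have haa : a n = α n + β n := rfl
    rw [hT_def]
    simp only
    rw [haa]
    have hp0' : P n ≠ 0 := hp0
    have hp1' : D1 n ≠ 0 := hp1
    have e1 : (1 - z^2) * (D2 n / (((n:ℂ) - 1) * D1 n)) * (D1 n / ((n:ℂ) * P n)) * ((n:ℂ) / (α n + β n))
        = (1 - z^2) * D2 n * ((((n:ℂ) - 1))⁻¹ * (α n + β n)⁻¹ * (P n)⁻¹) := by
      field_simp
    have e2 : ((β n - α n) / (α n + β n) - z * (1 + 2 * (α n + β n)⁻¹)) * ((n:ℂ) / ((n:ℂ) - 1)) * (D1 n / ((n:ℂ) * P n))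
        = ((β n - α n) - (α n + β n + 2) * z) * D1 n * ((((n:ℂ) - 1))⁻¹ * (α n + β n)⁻¹ * (P n)⁻¹) := by
      field_simp
    have e3 : ((n:ℂ) / ((n:ℂ) - 1)) * ((n:ℂ) / (α n + β n) + 1 + (α n + β n)⁻¹)
        = ((n:ℂ) * ((n:ℂ) + α n + β n + 1)) * P n * ((((n:ℂ) - 1))⁻¹ * (α n + β n)⁻¹ * (P n)⁻¹) := by
      field_simp
      ring
    rw [e1, e2, e3, ← add_mul, ← add_mul, hE, zero_mul]
  have hzero : Tendsto T atTop (𝓝 0) := Tendsto.congr' (hT0.mono fun n h => h.symm) tendsto_const_nhds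
  have := tendsto_nhds_unique hTlim hzero
  have h : (κ - z) * F z + 1 = 0 := by linear_combination this
  linear_combination -h
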